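/- Two copies of the two-qubit gate XX(α) acting on overlapping qubit pairs (1,2) and (2,3) of a three-qubit register commute: (XX(α) ⊗ I₂)·(I₂ ⊗ XX(β)) = (I₂ ⊗ XX(β))·(XX(α) ⊗ I₂). -/

import Mathlib

open Matrix
open scoped Kronecker

noncomputable section

def PX : Matrix (Fin 2) (Fin 2) ℂ := !![0, 1; 1, 0]

def XXg (α : ℝ) : Matrix (Fin 2 × Fin 2) (Fin 2 × Fin 2) ℂ :=
  NormedSpace.exp (((-(α / 2) : ℝ) • Complex.I) • (PX ⊗ₖ PX))

def I₂ : Matrix (Fin 2) (Fin 2) ℂ := 1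

/-- Reassociate an `8×8` matrix indexed by `Fin 2 × (Fin 2 × Fin 2)` to one indexed by
`(Fin 2 × Fin 2) × Fin 2`. -/
def assoc8 (M : Matrix (Fin 2 × (Fin 2 × Fin 2)) (Fin 2 × (Fin 2 × Fin 2)) ℂ) :
    Matrix ((Fin 2 × Fin 2) × Fin 2) ((Fin 2 × Fin 2) × Fin 2) ℂ :=
  Matrix.reindex (Equiv.prodAssoc (Fin 2) (Fin 2) (Fin 2)).symm
    (Equiv.prodAssoc (Fin 2) (Fin 2) (Fin 2)).symm M

section Aux

variable {n m : Type*} [Fintype n] [DecidableEq n] [Fintype m] [DecidableEq m]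

/-- `A ↦ A ⊗ₖ 1` as an algebra homomorphism. -/
def kronOneAlgHom (n m : Type*) [Fintype n] [DecidableEq n] [Fintype m] [DecidableEq m] :
    Matrix n n ℂ →ₐ[ℂ] Matrix (n × m) (n × m) ℂ where
  toFun A := A ⊗ₖ (1 : Matrix m m ℂ)
  map_one' := Matrix.one_kronecker_one
  map_mul' A B := by rw [← Matrix.mul_kronecker_mul, Matrix.one_mul]
  map_zero' := Matrix.zero_kronecker _
  map_add' A B := Matrix.add_kronecker A B 1
  commutes' c := by
    simp only [Algebra.algebraMap_eq_smul_one, Matrix.smul_kronecker, Matrix.one_kronecker_one]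

/-- `A ↦ 1 ⊗ₖ A` as an algebra homomorphism. -/
def oneKronAlgHom (n m : Type*) [Fintype n] [DecidableEq n] [Fintype m] [DecidableEq m] :
    Matrix n n ℂ →ₐ[ℂ] Matrix (m × n) (m × n) ℂ where
  toFun A := (1 : Matrix m m ℂ) ⊗ₖ A
  map_one' := Matrix.one_kronecker_one
  map_mul' A B := by rw [← Matrix.mul_kronecker_mul, Matrix.one_mul]
  map_zero' := Matrix.kronecker_zero _
  map_add' A B := Matrix.kronecker_add 1 A B
  commutes' c := by
    simp only [Algebra.algebraMap_eq_smul_one, Matrix.kronecker_smul, Matrix.one_kronecker_one]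

lemma exp_kron_one (A : Matrix n n ℂ) :
    NormedSpace.exp A ⊗ₖ (1 : Matrix m m ℂ) = NormedSpace.exp (A ⊗ₖ (1 : Matrix m m ℂ)) := by
  letI : SeminormedRing (Matrix n n ℂ) := Matrix.linftyOpSemiNormedRing
  letI : NormedRing (Matrix n n ℂ) := Matrix.linftyOpNormedRing
  letI : NormedAlgebra ℂ (Matrix n n ℂ) := Matrix.linftyOpNormedAlgebra
  letI : SeminormedRing (Matrix (n × m) (n × m) ℂ) := Matrix.linftyOpSemiNormedRing
  letI : NormedRing (Matrix (n × m) (n × m) ℂ) := Matrix.linftyOpNormedRing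
  letI : NormedAlgebra ℂ (Matrix (n × m) (n × m) ℂ) := Matrix.linftyOpNormedAlgebra
  letI : NormedAlgebra ℚ (Matrix n n ℂ) := .restrictScalars ℚ ℂ _
  exact NormedSpace.map_exp (kronOneAlgHom n m)
    ((kronOneAlgHom n m).toLinearMap.continuous_of_finiteDimensional) A

lemma one_kron_exp (A : Matrix n n ℂ) :
    (1 : Matrix m m ℂ) ⊗ₖ NormedSpace.exp A = NormedSpace.exp ((1 : Matrix m m ℂ) ⊗ₖ A) := by
  letI : SeminormedRing (Matrix n n ℂ) := Matrix.linftyOpSemiNormedRing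
  letI : NormedRing (Matrix n n ℂ) := Matrix.linftyOpNormedRing
  letI : NormedAlgebra ℂ (Matrix n n ℂ) := Matrix.linftyOpNormedAlgebra
  letI : SeminormedRing (Matrix (m × n) (m × n) ℂ) := Matrix.linftyOpSemiNormedRing
  letI : NormedRing (Matrix (m × n) (m × n) ℂ) := Matrix.linftyOpNormedRing
  letI : NormedAlgebra ℂ (Matrix (m × n) (m × n) ℂ) := Matrix.linftyOpNormedAlgebra
  letI : NormedAlgebra ℚ (Matrix n n ℂ) := .restrictScalars ℚ ℂ _
  exact NormedSpace.map_exp (oneKronAlgHom n m)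
    ((oneKronAlgHom n m).toLinearMap.continuous_of_finiteDimensional) A

end Aux

lemma assoc8_exp (A : Matrix (Fin 2 × (Fin 2 × Fin 2)) (Fin 2 × (Fin 2 × Fin 2)) ℂ) :
    assoc8 (NormedSpace.exp A) = NormedSpace.exp (assoc8 A) := by
  letI : SeminormedRing (Matrix (Fin 2 × (Fin 2 × Fin 2)) (Fin 2 × (Fin 2 × Fin 2)) ℂ) :=
    Matrix.linftyOpSemiNormedRing
  letI : NormedRing (Matrix (Fin 2 × (Fin 2 × Fin 2)) (Fin 2 × (Fin 2 × Fin 2)) ℂ) :=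
    Matrix.linftyOpNormedRing
  letI : NormedAlgebra ℂ (Matrix (Fin 2 × (Fin 2 × Fin 2)) (Fin 2 × (Fin 2 × Fin 2)) ℂ) :=
    Matrix.linftyOpNormedAlgebra
  letI : SeminormedRing (Matrix ((Fin 2 × Fin 2) × Fin 2) ((Fin 2 × Fin 2) × Fin 2) ℂ) :=
    Matrix.linftyOpSemiNormedRing
  letI : NormedRing (Matrix ((Fin 2 × Fin 2) × Fin 2) ((Fin 2 × Fin 2) × Fin 2) ℂ) :=
    Matrix.linftyOpNormedRing
  letI : NormedAlgebra ℂ (Matrix ((Fin 2 × Fin 2) × Fin 2) ((Fin 2 × Fin 2) × Fin 2) ℂ) :=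
    Matrix.linftyOpNormedAlgebra
  letI : NormedAlgebra ℚ (Matrix (Fin 2 × (Fin 2 × Fin 2)) (Fin 2 × (Fin 2 × Fin 2)) ℂ) :=
    .restrictScalars ℚ ℂ _
  exact NormedSpace.map_exp
    (Matrix.reindexAlgEquiv ℂ ℂ (Equiv.prodAssoc (Fin 2) (Fin 2) (Fin 2)).symm).toAlgHom
    (by exact (Matrix.reindexAlgEquiv ℂ ℂ
      (Equiv.prodAssoc (Fin 2) (Fin 2) (Fin 2)).symm).toLinearMap.continuous_of_finiteDimensional) A

lemma PX_sq : PX * PX = 1 := by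
  rw [PX, Matrix.one_fin_two]
  norm_num [Matrix.mul_fin_two]

lemma key_commute :
    Commute ((PX ⊗ₖ PX) ⊗ₖ I₂) (assoc8 (I₂ ⊗ₖ (PX ⊗ₖ PX))) := by
  have h : assoc8 (I₂ ⊗ₖ (PX ⊗ₖ PX)) = (I₂ ⊗ₖ PX) ⊗ₖ PX := by
    have := Matrix.kronecker_assoc' (I₂ : Matrix (Fin 2) (Fin 2) ℂ) PX PX
    unfold assoc8
    rw [← this]
    rfl
  rw [h]
  show _ * _ = _ * _
  rw [← Matrix.mul_kronecker_mul, ← Matrix.mul_kronecker_mul,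
      ← Matrix.mul_kronecker_mul, ← Matrix.mul_kronecker_mul]
  simp [I₂, PX_sq]

theorem XX_overlapping_commute (α β : ℝ) :
    (XXg α ⊗ₖ I₂) * assoc8 (I₂ ⊗ₖ XXg β) = assoc8 (I₂ ⊗ₖ XXg β) * (XXg α ⊗ₖ I₂) := by
  have h1 : XXg α ⊗ₖ I₂ =
      NormedSpace.exp ((((-(α / 2) : ℝ) • Complex.I) • (PX ⊗ₖ PX)) ⊗ₖ (I₂ : Matrix (Fin 2) (Fin 2) ℂ)) := by
    rw [XXg, I₂, exp_kron_one]
  have h2 : assoc8 (I₂ ⊗ₖ XXg β) =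
      NormedSpace.exp (assoc8 ((I₂ : Matrix (Fin 2) (Fin 2) ℂ) ⊗ₖ
        (((-(β / 2) : ℝ) • Complex.I) • (PX ⊗ₖ PX)))) := by
    rw [XXg, I₂, one_kron_exp, assoc8_exp]
  rw [h1, h2]
  letI : SeminormedRing (Matrix ((Fin 2 × Fin 2) × Fin 2) ((Fin 2 × Fin 2) × Fin 2) ℂ) :=
    Matrix.linftyOpSemiNormedRing
  letI : NormedRing (Matrix ((Fin 2 × Fin 2) × Fin 2) ((Fin 2 × Fin 2) × Fin 2) ℂ) :=
    Matrix.linftyOpNormedRing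
  letI : NormedAlgebra ℂ (Matrix ((Fin 2 × Fin 2) × Fin 2) ((Fin 2 × Fin 2) × Fin 2) ℂ) :=
    Matrix.linftyOpNormedAlgebra
  refine Commute.exp ?_
  have hc := key_commute
  have e1 : (((-(α / 2) : ℝ) • Complex.I) • (PX ⊗ₖ PX)) ⊗ₖ (I₂ : Matrix (Fin 2) (Fin 2) ℂ)
      = ((-(α / 2) : ℝ) • Complex.I) • ((PX ⊗ₖ PX) ⊗ₖ I₂) := by
    rw [Matrix.smul_kronecker]
  have e2 : assoc8 ((I₂ : Matrix (Fin 2) (Fin 2) ℂ) ⊗ₖ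
        (((-(β / 2) : ℝ) • Complex.I) • (PX ⊗ₖ PX)))
      = ((-(β / 2) : ℝ) • Complex.I) • assoc8 (I₂ ⊗ₖ (PX ⊗ₖ PX)) := by
    rw [Matrix.kronecker_smul]
    rfl
  rw [e1, e2]
  exact (hc.smul_left _).smul_right _

end
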